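/- Let {ω⁽ⁿ⁾} be measurable subsets of ℝ^d whose characteristic functions χ_{ω⁽ⁿ⁾} converge weakly-* in L^∞(ℝ^d) to the characteristic function χ_ω of a measurable set ω. Then χ_{ω⁽ⁿ⁾} → χ_ω strongly in L^p_loc(ℝ^d) for every p < ∞ and almost everywhere (along a subsequence for the a.e. claim). -/

import Mathlib

open MeasureTheory Filter

lemma stmt19_aux {d : ℕ}
    (ω : ℕ → Set (Fin d → ℝ)) (ωlim : Set (Fin d → ℝ))
    (hmeas : ∀ n, MeasurableSet (ω n)) (hlim : MeasurableSet ωlim)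
    (hweak : ∀ ψ : (Fin d → ℝ) → ℝ, Integrable ψ →
      Tendsto (fun n => ∫ x, (ω n).indicator (fun _ => (1:ℝ)) x * ψ x) atTop
        (nhds (∫ x, ωlim.indicator (fun _ => (1:ℝ)) x * ψ x)))
    (g : (Fin d → ℝ) → ℝ) (hg : Integrable g) :
    Tendsto (fun n => ∫ x, |(ω n).indicator (fun _ => (1:ℝ)) x
        - ωlim.indicator (fun _ => (1:ℝ)) x| * g x) atTop (nhds 0) := by
  have hbdd : ∀ (s : Set (Fin d → ℝ)) x, ‖s.indicator (fun _ => (1:ℝ)) x‖ ≤ 1 := by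
    intro s x; by_cases h : x ∈ s <;> simp [Set.indicator, h]
  have hχm : ∀ n, AEStronglyMeasurable ((ω n).indicator fun _ => (1:ℝ)) volume :=
    fun n => (measurable_const.indicator (hmeas n)).aestronglyMeasurable
  have hχlm : AEStronglyMeasurable (ωlim.indicator fun _ => (1:ℝ)) volume :=
    (measurable_const.indicator hlim).aestronglyMeasurable
  have h1 : ∀ n, Integrable (fun x => (ω n).indicator (fun _ => (1:ℝ)) x * g x) :=
    fun n => hg.bdd_mul (hχm n) (Filter.Eventually.of_forall (hbdd _))
  have hχg : Integrable (fun x => ωlim.indicator (fun _ => (1:ℝ)) x * g x) :=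
    hg.bdd_mul hχlm (Filter.Eventually.of_forall (hbdd _))
  have h2 : ∀ n, Integrable (fun x => (ω n).indicator (fun _ => (1:ℝ)) x *
      (ωlim.indicator (fun _ => (1:ℝ)) x * g x)) :=
    fun n => hχg.bdd_mul (hχm n) (Filter.Eventually.of_forall (hbdd _))
  have hsq : (fun x => ωlim.indicator (fun _ => (1:ℝ)) x *
      (ωlim.indicator (fun _ => (1:ℝ)) x * g x)) =
      fun x => ωlim.indicator (fun _ => (1:ℝ)) x * g x := by
    funext x; by_cases h : x ∈ ωlim <;> simp [Set.indicator, h]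
  have key : ∀ n, (fun x => |(ω n).indicator (fun _ => (1:ℝ)) x
        - ωlim.indicator (fun _ => (1:ℝ)) x| * g x) =
      fun x => (ω n).indicator (fun _ => (1:ℝ)) x * g x
        + ωlim.indicator (fun _ => (1:ℝ)) x * g x
        - 2 * ((ω n).indicator (fun _ => (1:ℝ)) x *
            (ωlim.indicator (fun _ => (1:ℝ)) x * g x)) := by
    intro n; funext x
    by_cases h1 : x ∈ ω n <;> by_cases h2 : x ∈ ωlim <;>
      simp [Set.indicator, h1, h2] <;> ring
  have tA := hweak g hg
  have tB := hweak (fun x => ωlim.indicator (fun _ => (1:ℝ)) x * g x) hχg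
  rw [show (∫ x, ωlim.indicator (fun _ => (1:ℝ)) x *
      (ωlim.indicator (fun _ => (1:ℝ)) x * g x)) =
      ∫ x, ωlim.indicator (fun _ => (1:ℝ)) x * g x from by rw [hsq]] at tB
  have T : Tendsto (fun n => ((∫ x, (ω n).indicator (fun _ => (1:ℝ)) x * g x)
        + ∫ x, ωlim.indicator (fun _ => (1:ℝ)) x * g x)
        - 2 * ∫ x, (ω n).indicator (fun _ => (1:ℝ)) x *
            (ωlim.indicator (fun _ => (1:ℝ)) x * g x)) atTop
      (nhds (((∫ x, ωlim.indicator (fun _ => (1:ℝ)) x * g x)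
        + ∫ x, ωlim.indicator (fun _ => (1:ℝ)) x * g x)
        - 2 * ∫ x, ωlim.indicator (fun _ => (1:ℝ)) x * g x)) :=
    (tA.add tendsto_const_nhds).sub (tB.const_mul 2)
  have heq : (fun n => ∫ x, |(ω n).indicator (fun _ => (1:ℝ)) x
        - ωlim.indicator (fun _ => (1:ℝ)) x| * g x) =
      fun n => ((∫ x, (ω n).indicator (fun _ => (1:ℝ)) x * g x)
        + ∫ x, ωlim.indicator (fun _ => (1:ℝ)) x * g x)
        - 2 * ∫ x, (ω n).indicator (fun _ => (1:ℝ)) x *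
            (ωlim.indicator (fun _ => (1:ℝ)) x * g x) := by
    funext n
    have hadd : Integrable (fun x => (ω n).indicator (fun _ => (1:ℝ)) x * g x
        + ωlim.indicator (fun _ => (1:ℝ)) x * g x) := (h1 n).add hχg
    have hmul : Integrable (fun x => 2 * ((ω n).indicator (fun _ => (1:ℝ)) x *
        (ωlim.indicator (fun _ => (1:ℝ)) x * g x))) := (h2 n).const_mul 2
    rw [key n, integral_sub hadd hmul, integral_add (h1 n) hχg, integral_const_mul]
  rw [heq]
  convert T using 2
  ring

/-- If characteristic functions `χ_{ω⁽ⁿ⁾}` of measurable sets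
converge weakly-* in `L^∞(ℝ^d)` (i.e., tested against every `ψ ∈ L¹`) to the
characteristic function `χ_ω` of a measurable set, then `χ_{ω⁽ⁿ⁾} → χ_ω` strongly in
`L^p_loc(ℝ^d)` for every `p < ∞`, and almost everywhere along a subsequence. -/
theorem statement_19 {d : ℕ}
    (ω : ℕ → Set (Fin d → ℝ)) (ωlim : Set (Fin d → ℝ))
    (hmeas : ∀ n, MeasurableSet (ω n)) (hlim : MeasurableSet ωlim)
    (hweak : ∀ ψ : (Fin d → ℝ) → ℝ, Integrable ψ →
      Tendsto (fun n => ∫ x, (ω n).indicator (fun _ => (1:ℝ)) x * ψ x) atTop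
        (nhds (∫ x, ωlim.indicator (fun _ => (1:ℝ)) x * ψ x))) :
    (∀ K : Set (Fin d → ℝ), IsCompact K → ∀ p : ℝ, 1 ≤ p →
      Tendsto (fun n => ∫ x in K,
          |(ω n).indicator (fun _ => (1:ℝ)) x
            - ωlim.indicator (fun _ => (1:ℝ)) x| ^ p) atTop (nhds 0)) ∧
    ∃ φ : ℕ → ℕ, StrictMono φ ∧
      ∀ᵐ x : Fin d → ℝ,
        Tendsto (fun m => (ω (φ m)).indicator (fun _ => (1:ℝ)) x) atTop
          (nhds (ωlim.indicator (fun _ => (1:ℝ)) x)) := by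
  have hΔmeas : ∀ n, Measurable (fun x => (ω n).indicator (fun _ => (1:ℝ)) x
      - ωlim.indicator (fun _ => (1:ℝ)) x) :=
    fun n => (measurable_const.indicator (hmeas n)).sub (measurable_const.indicator hlim)
  have hΔabs : ∀ n x, |(ω n).indicator (fun _ => (1:ℝ)) x
      - ωlim.indicator (fun _ => (1:ℝ)) x| ≤ 1 := by
    intro n x
    by_cases h1 : x ∈ ω n <;> by_cases h2 : x ∈ ωlim <;> simp [Set.indicator, h1, h2]
  constructor
  · intro K hK p hp
    have hKm : MeasurableSet K := hK.isClosed.measurableSet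
    have hgK : Integrable (K.indicator fun _ => (1:ℝ)) := by
      rw [integrable_indicator_iff hKm]
      exact integrableOn_const hK.measure_lt_top.ne
    have h0 := stmt19_aux ω ωlim hmeas hlim hweak _ hgK
    refine h0.congr fun n => ?_
    rw [← integral_indicator hKm]
    congr 1
    funext x
    by_cases hx : x ∈ K
    · have hpne : p ≠ 0 := by positivity
      by_cases h1 : x ∈ ω n <;> by_cases h2 : x ∈ ωlim <;>
        simp [Set.indicator, hx, h1, h2, Real.zero_rpow hpne, Real.one_rpow,
          Real.rpow_natCast]
    · simp [Set.indicator, hx]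
  · obtain ⟨ν, hνfin, hac1, hac2⟩ :=
      exists_isFiniteMeasure_absolutelyContinuous (volume : Measure (Fin d → ℝ))
    haveI := hνfin
    have hρmeas : Measurable (ν.rnDeriv volume) := Measure.measurable_rnDeriv _ _
    have hρint : Integrable (fun x => (ν.rnDeriv volume x).toReal) volume :=
      Measure.integrable_toReal_rnDeriv
    have h0 := stmt19_aux ω ωlim hmeas hlim hweak _ hρint
    have hwd : volume.withDensity (ν.rnDeriv volume) = ν :=
      Measure.withDensity_rnDeriv_eq ν volume hac2
    have hkey : ∀ n, eLpNorm ((fun x => (ω n).indicator (fun _ => (1:ℝ)) x)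
          - fun x => ωlim.indicator (fun _ => (1:ℝ)) x) 1 ν
        = ENNReal.ofReal (∫ x, |(ω n).indicator (fun _ => (1:ℝ)) x
            - ωlim.indicator (fun _ => (1:ℝ)) x| * (ν.rnDeriv volume x).toReal) := by
      intro n
      rw [eLpNorm_one_eq_lintegral_enorm]
      have hint : Integrable (fun x => |(ω n).indicator (fun _ => (1:ℝ)) x
          - ωlim.indicator (fun _ => (1:ℝ)) x| * (ν.rnDeriv volume x).toReal) volume :=
        hρint.bdd_mul (hΔmeas n).abs.aestronglyMeasurable
          (Filter.Eventually.of_forall fun x => by simpa [abs_abs] using hΔabs n x)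
      rw [ofReal_integral_eq_lintegral_ofReal hint
        (Filter.Eventually.of_forall fun x =>
          mul_nonneg (abs_nonneg _) ENNReal.toReal_nonneg)]
      simp only [Pi.sub_apply]
      conv_lhs => rw [← hwd]
      rw [lintegral_withDensity_eq_lintegral_mul _ hρmeas
        ((hΔmeas n).enorm)]
      refine lintegral_congr_ae ?_
      filter_upwards [Measure.rnDeriv_lt_top ν volume] with x hx
      rw [ENNReal.ofReal_mul (abs_nonneg _), ENNReal.ofReal_toReal hx.ne,
        ← Real.enorm_eq_ofReal_abs, mul_comm]
      rfl
    have hSN : Tendsto (fun n => eLpNorm ((fun x => (ω n).indicator (fun _ => (1:ℝ)) x)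
          - fun x => ωlim.indicator (fun _ => (1:ℝ)) x) 1 ν) atTop (nhds 0) := by
      simp only [hkey]
      simpa using ENNReal.tendsto_ofReal h0
    have htm : TendstoInMeasure ν (fun n x => (ω n).indicator (fun _ => (1:ℝ)) x) atTop
        (fun x => ωlim.indicator (fun _ => (1:ℝ)) x) :=
      tendstoInMeasure_of_tendsto_eLpNorm (p := 1) one_ne_zero
        (fun n => (measurable_const.indicator (hmeas n)).aestronglyMeasurable)
        ((measurable_const.indicator hlim)).aestronglyMeasurable hSN
    obtain ⟨φ, hφ, hae⟩ := htm.exists_seq_tendsto_ae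
    exact ⟨φ, hφ, Filter.Eventually.filter_mono hac1.ae_le hae⟩
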